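/- Let Ã_B have full column rank, Ã_j = Ã_B Ã_B† Ã_j, and u' = Ã_B†Ã_j. If i* is an index of B with u'_{i*} ≠ 0, then the matrix obtained from A_B by replacing column i* with A_j still has affinely independent columns (equivalently, replacing column Ã_{B(i*)} by Ã_j in Ã_B preserves full column rank). -/

import Mathlib

open Matrix

noncomputable section

def aug {m n : ℕ} (A : Matrix (Fin m) (Fin n) ℝ) : Matrix (Fin (m + 1)) (Fin n) ℝ :=
  Matrix.of fun i j => Fin.cases 1 (fun i' => A i' j) i

def pinv {p k : ℕ} (M : Matrix (Fin p) (Fin k) ℝ) : Matrix (Fin k) (Fin p) ℝ :=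
  (Mᵀ * M)⁻¹ * Mᵀ

theorem stmt4 {m n k : ℕ} (A : Matrix (Fin m) (Fin n) ℝ) (B : Fin k → Fin n)
    (hBinj : Function.Injective B) (j : Fin n) (hj : j ∉ Set.range B)
    (AB : Matrix (Fin (m + 1)) (Fin k) ℝ) (hAB : AB = (aug A).submatrix id B)
    (aj : Fin (m + 1) → ℝ) (haj : aj = fun i => aug A i j)
    (hrank : LinearIndependent ℝ ABᵀ)
    (hdep : aj = (AB * pinv AB).mulVec aj)
    (u' : Fin k → ℝ) (hu' : u' = (pinv AB).mulVec aj)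
    (istar : Fin k) (histar : u' istar ≠ 0)
    -- `Ã_B` with column `i*` replaced by `Ã_j`
    (N : Matrix (Fin (m + 1)) (Fin k) ℝ)
    (hN : N = Matrix.of fun i c => if c = istar then aj i else AB i c) :
    LinearIndependent ℝ Nᵀ := by
  have key : ∀ i0, aj i0 = ∑ c, u' c * AB i0 c := by
    intro i0
    have h1 : aj i0 = AB.mulVec u' i0 := by
      rw [hu', Matrix.mulVec_mulVec]
      exact congrFun hdep i0
    rw [h1]
    simp [Matrix.mulVec, dotProduct, mul_comm]
  replace hrank := Fintype.linearIndependent_iff.mp hrank; refine Fintype.linearIndependent_iff.mpr ?_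
  intro g hg
  have hg0 : ∀ i0, ∑ c, g c * N i0 c = 0 := by
    intro i0
    have := congrFun hg i0
    simpa [Finset.sum_apply] using this
  set f : Fin k → ℝ := fun c => (if c = istar then 0 else g c) + g istar * u' c with hf
  have hfs : ∀ c, f c = 0 := by
    apply hrank
    funext i0
    simp only [Finset.sum_apply, Pi.smul_apply, Matrix.transpose_apply, smul_eq_mul,
      Pi.zero_apply]
    have e1 : ∑ c, f c * AB i0 c
        = (∑ c, (if c = istar then 0 else g c) * AB i0 c) + g istar * ∑ c, u' c * AB i0 c := by
      rw [Finset.mul_sum, ← Finset.sum_add_distrib]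
      apply Finset.sum_congr rfl
      intro c _
      simp [hf, add_mul]; ring
    have e2 : ∑ c, g c * N i0 c
        = (∑ c, (if c = istar then 0 else g c) * AB i0 c) + g istar * aj i0 := by
      have : ∀ c, g c * N i0 c
          = (if c = istar then 0 else g c) * AB i0 c
            + (if c = istar then g istar * aj i0 else 0) := by
        intro c
        by_cases hc : c = istar <;> simp [hN, hc]
      simp_rw [this]
      rw [Finset.sum_add_distrib, Finset.sum_ite_eq' Finset.univ istar]
      simp
    rw [e1, ← key i0]
    have := hg0 i0
    rw [e2] at this
    linarith
  have hgi : g istar = 0 := by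
    have := hfs istar
    simp [hf] at this
    rcases this with h | h
    · exact h
    · exact absurd h histar
  intro c
  by_cases hc : c = istar
  · rw [hc]; exact hgi
  · have := hfs c
    simp [hf, hc, hgi] at this
    exact this
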